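/- The image of Ψ : SL(2,ℝ) → Ein³ is exactly the set of points [X:Y:Z:U:V] of the projectivized null cone of Q with U ≠ V; equivalently, the complement of the image of Ψ in Ein³ is the fixed-point set of the involution [X:Y:Z:U:V] ↦ [X:Y:Z:V:U]. -/
import Mathlib


open Matrix

/-- The map `Ψ` in homogeneous coordinates:
`[[a,b],[c,d]] ↦ (a-d, b+c, b-c, a+d-2, a+d+2)`. -/
def psiVec (M : Matrix (Fin 2) (Fin 2) ℝ) : Fin 5 → ℝ :=
  ![M 0 0 - M 1 1, M 0 1 + M 1 0, M 0 1 - M 1 0, M 0 0 + M 1 1 - 2, M 0 0 + M 1 1 + 2]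

/-- The involution `I_S : [X:Y:Z:U:V] ↦ [X:Y:Z:V:U]` on homogeneous coordinates. -/
def swapUV (v : Fin 5 → ℝ) : Fin 5 → ℝ := ![v 0, v 1, v 2, v 4, v 3]

lemma exists_iff_ne (v : Fin 5 → ℝ)
    (hQ : v 0 ^ 2 + v 1 ^ 2 - v 2 ^ 2 - v 3 * v 4 = 0) :
    (∃ M : Matrix (Fin 2) (Fin 2) ℝ, M.det = 1 ∧ ∃ c : ℝ, c ≠ 0 ∧ psiVec M = c • v) ↔
        v 3 ≠ v 4 := by
  constructor
  · rintro ⟨M, hM, c, hc, h⟩ hne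
    have h3 := congrFun h 3
    have h4 := congrFun h 4
    simp [psiVec, Pi.smul_apply, smul_eq_mul] at h3 h4
    rw [hne] at h3
    linarith [h3, h4]
  · intro hne
    have hd : v 4 - v 3 ≠ 0 := fun h => hne (by linarith [sub_eq_zero.mp h])
    obtain ⟨c, hc, hc4⟩ : ∃ c : ℝ, c ≠ 0 ∧ c * (v 4 - v 3) = 4 :=
      ⟨4 / (v 4 - v 3), div_ne_zero (by norm_num) hd, by field_simp⟩
    refine ⟨!![(c * v 3 + 2 + c * v 0)/2, c * (v 1 + v 2)/2;
        c * (v 1 - v 2)/2, (c * v 3 + 2 - c * v 0)/2], ?_, c, hc, ?_⟩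
    · rw [Matrix.det_fin_two_of]
      have hteq : c * v 3 + 2 = c * v 4 - 2 := by linear_combination -hc4
      have ht2 : (c * v 3 + 2) ^ 2 - c ^ 2 * (v 3 * v 4) = 4 := by
        calc (c * v 3 + 2) ^ 2 - c ^ 2 * (v 3 * v 4)
            = (c * v 3 + 2) * (c * v 4 - 2) - c ^ 2 * (v 3 * v 4) := by
              rw [sq]; nth_rewrite 2 [hteq]; ring
          _ = 2 * (c * (v 4 - v 3)) - 4 := by ring
          _ = 4 := by rw [hc4]; ring
      linear_combination ht2 / 4 - (c ^ 2 / 4) * hQ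
    · funext i
      fin_cases i
      · simp [psiVec]; ring
      · simp [psiVec]; ring
      · simp [psiVec]; ring
      · simp [psiVec]; ring
      · simp [psiVec]; linear_combination -hc4

/-- The image of `Ψ : SL(2,ℝ) → Ein³` is exactly the set of points of the projectivized
null cone of `Q = X² + Y² - Z² - UV` with `U ≠ V`; equivalently, the complement of the
image is the fixed-point set of the involution `[X:Y:Z:U:V] ↦ [X:Y:Z:V:U]`. -/
theorem psi_image_characterization (v : Fin 5 → ℝ) (hv : v ≠ 0)
    (hQ : v 0 ^ 2 + v 1 ^ 2 - v 2 ^ 2 - v 3 * v 4 = 0) :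
    ((∃ M : Matrix (Fin 2) (Fin 2) ℝ, M.det = 1 ∧ ∃ c : ℝ, c ≠ 0 ∧ psiVec M = c • v) ↔
        v 3 ≠ v 4) ∧
    ((∃ M : Matrix (Fin 2) (Fin 2) ℝ, M.det = 1 ∧ ∃ c : ℝ, c ≠ 0 ∧ psiVec M = c • v) ↔
        ¬ ∃ c : ℝ, c ≠ 0 ∧ swapUV v = c • v) := by
  have h1 := exists_iff_ne v hQ
  refine ⟨h1, h1.trans ?_⟩
  constructor
  · rintro hne ⟨c, hc, h⟩
    have h0 := congrFun h 0
    have hh1 := congrFun h 1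
    have h2 := congrFun h 2
    have h3 := congrFun h 3
    have h4 := congrFun h 4
    simp [swapUV, Pi.smul_apply, smul_eq_mul] at h0 hh1 h2 h3 h4
    -- h3 : v 4 = c * v 3,  h4 : v 3 = c * v 4
    have hcc : (1 - c ^ 2) * v 3 = 0 := by linear_combination h4 + c * h3
    have hcc' : (1 - c ^ 2) * v 4 = 0 := by linear_combination h3 + c * h4
    by_cases hsq : c ^ 2 = 1
    · rcases mul_self_eq_one_iff.mp (show c * c = 1 by linear_combination hsq) with rfl | rfl
      · exact hne (by linarith)
      · have hv0 : v 0 = 0 := by linarith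
        have hv1 : v 1 = 0 := by linarith
        have hv2 : v 2 = 0 := by linarith
        have h33 : v 3 * v 3 = 0 := by
          linear_combination hQ + v 3 * h3 - (v 0 / 2) * h0 - (v 1 / 2) * hh1 + (v 2 / 2) * h2
        have hv3 : v 3 = 0 := mul_self_eq_zero.mp h33
        have hv4 : v 4 = 0 := by rw [hv3] at h3; simpa using h3
        apply hv
        funext i
        fin_cases i <;> simp [hv0, hv1, hv2, hv3, hv4]
    · have hv3 : v 3 = 0 := by
        rcases mul_eq_zero.mp hcc with h' | h'
        · exact absurd (by linarith : c ^ 2 = 1) hsq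
        · exact h'
      have hv4 : v 4 = 0 := by
        rcases mul_eq_zero.mp hcc' with h' | h'
        · exact absurd (by linarith : c ^ 2 = 1) hsq
        · exact h'
      exact hne (hv3.trans hv4.symm)
  · intro h heq
    apply h
    refine ⟨1, one_ne_zero, ?_⟩
    funext i
    fin_cases i <;> simp [swapUV, heq]
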